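/- Let n be a positive integer and let η_1, …, η_n be any nonnegative integers. Define A_0 = 1 and, for t ∈ {1, …, n}, A_t = A_{t−1} + η_t − 1 if A_{t−1} > 0 and A_t = η_t if A_{t−1} = 0. Define Y_0 = 1 and Y_t = Y_{t−1} + η_t − 1, and define Z_t = #{ j : 1 ≤ j ≤ t−1 and A_j = 0 }. Then for every t ∈ {1, …, n}: (i) A_t = 0 if and only if Y_t < Y_s for all 0 ≤ s < t (i.e. Y attains a new record minimum at time t), and (ii) Z_t = − min_{0 ≤ s ≤ t−1} Y_s + 1. -/
import Mathlib


/-- **Record minima and component counts** (Nachmias–Peres, Section 2).  Given nonnegative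
integers `η_1, …, η_n`, define `A_0 = 1`, `A_t = A_{t-1} + η_t - 1` if `A_{t-1} > 0` and
`A_t = η_t` otherwise; define `Y_0 = 1`, `Y_t = Y_{t-1} + η_t - 1`; and let
`Z_t = #{j : 1 ≤ j ≤ t-1, A_j = 0}`.  Then for every `t ∈ {1, …, n}`:
(i) `A_t = 0` iff `Y` attains a new record minimum at time `t`, and
(ii) `Z_t = -min_{0 ≤ s ≤ t-1} Y_s + 1`. -/
theorem record_minima_and_component_count (n : ℕ) (hn : 0 < n)
    (η : ℕ → ℕ) (A : ℕ → ℕ) (Y : ℕ → ℤ)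
    (hA0 : A 0 = 1)
    (hA : ∀ t, 1 ≤ t → t ≤ n → A t = if 0 < A (t - 1) then A (t - 1) + η t - 1 else η t)
    (hY0 : Y 0 = 1)
    (hY : ∀ t, 1 ≤ t → t ≤ n → Y t = Y (t - 1) + η t - 1) :
    ∀ t, ∀ ht : 1 ≤ t, t ≤ n →
      (A t = 0 ↔ ∀ s, s < t → Y t < Y s) ∧
      ((((Finset.Icc 1 (t - 1)).filter fun j => A j = 0).card : ℤ) =
        -(Finset.range t).inf' (Finset.nonempty_range_iff.mpr (by omega)) Y + 1) := by
  set Z : ℕ → ℕ := fun t => ((Finset.Icc 1 (t - 1)).filter fun j => A j = 0).card with hZdef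
  have hZsucc : ∀ t, Z (t + 1) = Z t + (if A t = 0 then 1 else 0) := by
    intro t
    rcases Nat.eq_zero_or_pos t with h0 | hpos
    · subst h0
      simp [hZdef, hA0, Finset.Icc_eq_empty_of_lt]
    · have hins : Finset.Icc 1 t = insert t (Finset.Icc 1 (t - 1)) := by
        ext j; simp [Finset.mem_Icc]; omega
      by_cases h : A t = 0
      · simp only [hZdef, Nat.add_sub_cancel, hins, Finset.filter_insert, if_pos h]
        rw [Finset.card_insert_of_notMem (by simp [Finset.mem_Icc]; omega)]
      · simp [hZdef, Nat.add_sub_cancel, hins, Finset.filter_insert, h]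
  have key : ∀ t, t ≤ n → (A t : ℤ) = Y t + Z t := by
    intro t
    induction t with
    | zero => intro _; simp [hZdef, hA0, hY0, Finset.Icc_eq_empty_of_lt]
    | succ t ih =>
      intro htn
      have ih' := ih (by omega)
      have hAe := hA (t + 1) (by omega) htn
      have hYe := hY (t + 1) (by omega) htn
      simp only [Nat.add_sub_cancel] at hAe hYe
      have hZs := hZsucc t
      rcases Nat.eq_zero_or_pos (A t) with h0 | hpos
      · rw [hZs, hAe, if_neg (by omega)]
        rw [if_pos h0] at hZs ⊢
        push_cast
        omega
      · rw [hZs, hAe, if_pos hpos, if_neg (by omega)]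
        push_cast
        omega
  have hM : ∀ t (ht1 : 1 ≤ t), t ≤ n → (Z t : ℤ) =
      -(Finset.range t).inf' (Finset.nonempty_range_iff.mpr (by omega)) Y + 1 := by
    intro t ht1
    induction t, ht1 using Nat.le_induction with
    | base =>
      intro _
      have : (Finset.range 1).inf' (Finset.nonempty_range_iff.mpr (by omega)) Y = Y 0 := by
        simp [Finset.range_one]
      rw [this, hY0]
      simp [hZdef, Finset.Icc_eq_empty_of_lt]
    | succ t ht1 ih =>
      intro htn1
      have htn : t ≤ n := by omega
      have hne : (Finset.range t).Nonempty := Finset.nonempty_range_iff.mpr (by omega)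
      have hne' : (Finset.range (t + 1)).Nonempty := Finset.nonempty_range_iff.mpr (by omega)
      have ih2 : (Z t : ℤ) = -(Finset.range t).inf' hne Y + 1 := ih htn
      have hkey := key t htn
      have hZs := hZsucc t
      show (Z (t + 1) : ℤ) = -(Finset.range (t + 1)).inf' hne' Y + 1
      have hle : ∀ s, s < t → (Finset.range t).inf' hne Y ≤ Y s :=
        fun s hs => Finset.inf'_le Y (Finset.mem_range.mpr hs)
      obtain ⟨s0, hs0, hMs0⟩ := Finset.exists_mem_eq_inf' hne Y
      have hs0' : s0 < t := Finset.mem_range.mp hs0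
      rcases Nat.eq_zero_or_pos (A t) with h0 | hpos
      · have hYt : Y t = (Finset.range t).inf' hne Y - 1 := by omega
        have hnew : (Finset.range (t + 1)).inf' hne' Y = Y t := by
          apply le_antisymm
          · exact Finset.inf'_le Y (Finset.mem_range.mpr (by omega))
          · rw [Finset.le_inf'_iff]
            intro s hs
            rcases Nat.lt_succ_iff_lt_or_eq.mp (Finset.mem_range.mp hs) with h | h
            · have := hle s h; omega
            · rw [h]
        rw [hnew, hZs, if_pos h0]
        push_cast
        omega
      · have hYt : (Finset.range t).inf' hne Y ≤ Y t := by omega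
        have hnew : (Finset.range (t + 1)).inf' hne' Y = (Finset.range t).inf' hne Y := by
          apply le_antisymm
          · rw [hMs0]
            exact Finset.inf'_le Y (Finset.mem_range.mpr (by omega))
          · rw [Finset.le_inf'_iff]
            intro s hs
            rcases Nat.lt_succ_iff_lt_or_eq.mp (Finset.mem_range.mp hs) with h | h
            · exact hle s h
            · rw [h]; exact hYt
        rw [hnew, hZs, if_neg (by omega)]
        push_cast
        omega
  intro t ht htn
  have hne : (Finset.range t).Nonempty := Finset.nonempty_range_iff.mpr (by omega)
  have hkey := key t htn
  have hMt : (Z t : ℤ) = -(Finset.range t).inf' hne Y + 1 := hM t ht htn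
  constructor
  · constructor
    · intro h0 s hs
      have h1 : (Finset.range t).inf' hne Y ≤ Y s := Finset.inf'_le Y (Finset.mem_range.mpr hs)
      omega
    · intro hall
      have h2 : Y t < (Finset.range t).inf' hne Y := by
        rw [Finset.lt_inf'_iff]
        intro s hs
        exact hall s (Finset.mem_range.mp hs)
      omega
  · exact hM t ht htn
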